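/- Let x₁, …, x_N ∈ ℝ^n, σ > 0, and C ∈ ℝ^{N×d}. Define f: ℝ^n → ℝ^d componentwise by f_k(x) = Σ_{i=1}^N C_{ik}·exp(−‖x − x_i‖²/σ²) for k = 1, …, d. Then f is Lipschitz continuous with constant L = √2·e^{−1/2}·√N·σ^{−1}·‖C‖_F, i.e., ‖f(x) − f(x')‖ ≤ √2·e^{−1/2}·√N·σ^{−1}·‖C‖_F·‖x − x'‖ for all x, x' ∈ ℝ^n. -/

import Mathlib

lemma key_ineq (s : ℝ) (hs : 0 ≤ s) :
    2 * s * Real.exp (-s ^ 2) ≤ Real.sqrt 2 * Real.exp (-(1/2 : ℝ)) := by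
  have hsq : Real.sqrt 2 ^ 2 = 2 := Real.sq_sqrt (by norm_num)
  have h1 : s ^ 2 + 1/2 ≤ Real.exp (s ^ 2 - 1/2) := by
    have := Real.add_one_le_exp (s ^ 2 - 1/2); linarith
  have h2 : 2 * s ≤ Real.sqrt 2 * (s ^ 2 + 1/2) := by
    nlinarith [sq_nonneg (Real.sqrt 2 * s - 1), Real.sqrt_nonneg 2]
  have h3 : 2 * s ≤ Real.sqrt 2 * Real.exp (s ^ 2 - 1/2) := by
    nlinarith [Real.sqrt_nonneg 2]
  have h4 : Real.exp (s ^ 2 - 1/2) = Real.exp (s ^ 2) * Real.exp (-(1/2 : ℝ)) := by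
    rw [← Real.exp_add]; ring_nf
  have h5 : (0:ℝ) < Real.exp (s ^ 2) := Real.exp_pos _
  have h6 : Real.exp (-s ^ 2) = (Real.exp (s ^ 2))⁻¹ := by
    rw [← Real.exp_neg]
  rw [h6]
  rw [h4] at h3
  calc 2 * s * (Real.exp (s ^ 2))⁻¹
      ≤ Real.sqrt 2 * (Real.exp (s ^ 2) * Real.exp (-(1/2:ℝ))) * (Real.exp (s ^ 2))⁻¹ := by
        apply mul_le_mul_of_nonneg_right h3 (by positivity)
    _ = Real.sqrt 2 * Real.exp (-(1/2:ℝ)) := by field_simp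

lemma deriv_bound (σ : ℝ) (hσ : 0 < σ) (t : ℝ) :
    ‖(-(2*t)/σ^2) * Real.exp (-t^2/σ^2)‖ ≤ Real.sqrt 2 * Real.exp (-(1/2:ℝ)) / σ := by
  have h0 : ‖(-(2*t)/σ^2) * Real.exp (-t^2/σ^2)‖
      = (2*|t|/σ^2) * Real.exp (-t^2/σ^2) := by
    rw [norm_mul, Real.norm_eq_abs, Real.norm_eq_abs, Real.abs_exp, abs_div, abs_neg,
      abs_mul, abs_of_pos (by positivity : (0:ℝ) < σ^2)]
    norm_num
  rw [h0]
  have hs : (0:ℝ) ≤ |t|/σ := by positivity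
  have hk := key_ineq (|t|/σ) hs
  have he : (|t|/σ)^2 = t^2/σ^2 := by rw [div_pow, sq_abs]
  rw [he] at hk
  simp only [neg_div] 
  -- hk : 2 * (|t|/σ) * exp(-t²/σ²) ≤ √2 * exp(-1/2)
  have h2 : 2 * (|t|/σ) * Real.exp (-(t^2/σ^2)) / σ ≤ Real.sqrt 2 * Real.exp (-(1/2:ℝ)) / σ :=
    div_le_div_of_nonneg_right hk hσ.le
  calc 2*|t|/σ^2 * Real.exp (-(t^2/σ^2)) = 2 * (|t|/σ) * Real.exp (-(t^2/σ^2)) / σ := by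
        rw [sq]; field_simp
    _ ≤ _ := h2

lemma gauss_lip (σ : ℝ) (hσ : 0 < σ) (a b : ℝ) :
    |Real.exp (-a^2/σ^2) - Real.exp (-b^2/σ^2)|
      ≤ (Real.sqrt 2 * Real.exp (-(1/2:ℝ)) / σ) * |a - b| := by
  have hder : ∀ t : ℝ, HasDerivAt (fun u : ℝ => Real.exp (-u^2/σ^2))
      ((-(2*t)/σ^2) * Real.exp (-t^2/σ^2)) t := by
    intro t
    have h1 : HasDerivAt (fun u : ℝ => -u^2/σ^2) (-(2*t)/σ^2) t := by
      have := ((hasDerivAt_pow 2 t).neg).div_const (σ^2)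
      simpa [pow_one] using this
    simpa [mul_comm, Function.comp_def] using (Real.hasDerivAt_exp (-t^2/σ^2)).comp t h1
  have := Convex.norm_image_sub_le_of_norm_deriv_le (𝕜 := ℝ) (s := Set.univ)
    (f := fun u : ℝ => Real.exp (-u^2/σ^2))
    (fun t _ => (hder t).differentiableAt)
    (fun t _ => by rw [(hder t).deriv]; exact deriv_bound σ hσ t)
    convex_univ (Set.mem_univ b) (Set.mem_univ a)
  simpa [Real.norm_eq_abs] using this

/-- A Gaussian RBF interpolator with kernel centers `x i`, scale `σ`
and coefficient matrix `C` is Lipschitz with constant `√2·e^{−1/2}·√N·σ⁻¹·‖C‖_F`,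
where `‖C‖_F` is the Frobenius norm of `C`. -/
theorem rbf_interpolator_lipschitz
    {n d N : ℕ} (x : Fin N → EuclideanSpace ℝ (Fin n)) (σ : ℝ) (hσ : 0 < σ)
    (C : Matrix (Fin N) (Fin d) ℝ)
    (f : EuclideanSpace ℝ (Fin n) → EuclideanSpace ℝ (Fin d))
    (hf : ∀ (p : EuclideanSpace ℝ (Fin n)) (k : Fin d),
      f p k = ∑ i, C i k * Real.exp (-‖p - x i‖ ^ 2 / σ ^ 2)) :
    ∀ p q : EuclideanSpace ℝ (Fin n),
      ‖f p - f q‖ ≤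
        Real.sqrt 2 * Real.exp (-(1 / 2 : ℝ)) * Real.sqrt N * σ⁻¹ *
          Real.sqrt (∑ i, ∑ k, (C i k) ^ 2) * ‖p - q‖ := by
  intro p q
  set L := Real.sqrt 2 * Real.exp (-(1/2:ℝ)) / σ with hL
  have hL0 : 0 ≤ L := by rw [hL]; positivity
  set Δ : Fin N → ℝ :=
    fun i => Real.exp (-‖p - x i‖^2/σ^2) - Real.exp (-‖q - x i‖^2/σ^2) with hΔ
  have hΔle : ∀ i, |Δ i| ≤ L * ‖p - q‖ := by
    intro i
    refine le_trans (gauss_lip σ hσ _ _) ?_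
    have h1 : |‖p - x i‖ - ‖q - x i‖| ≤ ‖p - q‖ := by
      have := abs_norm_sub_norm_le (p - x i) (q - x i)
      simpa [sub_sub_sub_cancel_right] using this
    exact mul_le_mul_of_nonneg_left h1 hL0
  have hcomp : ∀ k, (f p - f q) k = ∑ i, C i k * Δ i := by
    intro k
    have h0 : (f p - f q) k = f p k - f q k := rfl
    rw [h0, hf p k, hf q k, ← Finset.sum_sub_distrib]
    exact Finset.sum_congr rfl fun i _ => by rw [hΔ]; ring
  have hnorm : ‖f p - f q‖ = Real.sqrt (∑ k, ((f p - f q) k)^2) := by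
    rw [EuclideanSpace.norm_eq]
    congr 1; apply Finset.sum_congr rfl; intro k _
    rw [Real.norm_eq_abs, sq_abs]
  have hbound : ∑ k, ((f p - f q) k)^2
      ≤ (∑ i, ∑ k, (C i k)^2) * (N * (L * ‖p-q‖)^2) := by
    calc ∑ k, ((f p - f q) k)^2 = ∑ k, (∑ i, C i k * Δ i)^2 := by
          exact Finset.sum_congr rfl fun k _ => by rw [hcomp]
      _ ≤ ∑ k, (∑ i, (C i k)^2) * (∑ i, (Δ i)^2) :=
          Finset.sum_le_sum fun k _ => Finset.sum_mul_sq_le_sq_mul_sq _ _ _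
      _ = (∑ k, ∑ i, (C i k)^2) * (∑ i, (Δ i)^2) := by rw [← Finset.sum_mul]
      _ ≤ (∑ k, ∑ i, (C i k)^2) * (N * (L * ‖p-q‖)^2) := by
          apply mul_le_mul_of_nonneg_left _ (by positivity)
          calc ∑ i, (Δ i)^2 ≤ ∑ _i : Fin N, (L * ‖p-q‖)^2 := by
                apply Finset.sum_le_sum; intro i _
                calc (Δ i)^2 = |Δ i|^2 := (sq_abs _).symm
                  _ ≤ (L * ‖p-q‖)^2 := pow_le_pow_left₀ (abs_nonneg _) (hΔle i) 2
            _ = N * (L*‖p-q‖)^2 := by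
                rw [Finset.sum_const, Finset.card_univ, Fintype.card_fin, nsmul_eq_mul]
      _ = (∑ i, ∑ k, (C i k)^2) * (N * (L * ‖p-q‖)^2) := by rw [Finset.sum_comm]
  rw [hnorm]
  calc Real.sqrt (∑ k, ((f p - f q) k)^2)
      ≤ Real.sqrt ((∑ i, ∑ k, (C i k)^2) * (N * (L * ‖p-q‖)^2)) :=
        Real.sqrt_le_sqrt hbound
    _ = Real.sqrt (∑ i, ∑ k, (C i k)^2) * (Real.sqrt N * (L * ‖p-q‖)) := by
        rw [Real.sqrt_mul (by positivity), Real.sqrt_mul (by positivity : (0:ℝ) ≤ (N:ℝ)),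
          Real.sqrt_sq (by positivity)]
    _ = Real.sqrt 2 * Real.exp (-(1 / 2 : ℝ)) * Real.sqrt N * σ⁻¹ *
          Real.sqrt (∑ i, ∑ k, (C i k) ^ 2) * ‖p - q‖ := by rw [hL]; ring
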